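/- Let Σ be a complete fan and suppose f ∈ Aut(Σ) is an isometry stabilizing a partial flag of cones {0} ⊊ τ_1 ⊊ ... ⊊ τ_r with τ_i ∈ Σ(i). Then f restricts to the identity on the linear span of τ_r. -/

import Mathlib

open scoped RealInnerProductSpace

namespace FanRS

variable {V : Type*} [NormedAddCommGroup V] [InnerProductSpace ℝ V]

/-- The (orthogonal) reflection in the hyperplane orthogonal to `a`. -/
noncomputable def reflAt (a : V) : V → V :=
  fun v => v - (2 * ⟪v, a⟫ / ⟪a, a⟫) • a

/-- The convex cone generated by a finite set `S`. -/
def coneOf (S : Finset V) : Set V :=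
  {v | ∃ c : V → ℝ, (∀ x, 0 ≤ c x) ∧ v = ∑ x ∈ S, c x • x}

/-- A strictly convex rational polyhedral cone with respect to the lattice `Λ`. -/
def IsLatticeCone (Λ : AddSubgroup V) (σ : Set V) : Prop :=
  ∃ S : Finset V, (S : Set V) ⊆ (Λ : Set V) ∧ σ = coneOf S ∧ ∀ v ∈ σ, -v ∈ σ → v = 0

/-- `F` is a face of the convex cone `σ`. -/
def IsFace (σ F : Set V) : Prop :=
  F ⊆ σ ∧ Convex ℝ F ∧ ∀ x ∈ σ, ∀ y ∈ σ, x + y ∈ F → x ∈ F ∧ y ∈ F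

/-- A fan in `Λ_ℝ`: a finite collection of rational polyhedral strictly convex cones,
closed under intersections (which are common faces) and under taking faces. -/
structure IsFan (Λ : AddSubgroup V) (F : Set (Set V)) : Prop where
  finite : F.Finite
  isCone : ∀ σ ∈ F, IsLatticeCone Λ σ
  inter_mem : ∀ σ ∈ F, ∀ τ ∈ F, σ ∩ τ ∈ F ∧ IsFace σ (σ ∩ τ) ∧ IsFace τ (σ ∩ τ)
  face_mem : ∀ σ ∈ F, ∀ τ, IsFace σ τ → τ ∈ F

/-- A complete fan: the cones cover the ambient space. -/
def IsComplete (F : Set (Set V)) : Prop := ⋃₀ F = Set.univ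

/-- `Λ` is a (full) lattice in `V`. -/
def IsLattice (Λ : AddSubgroup V) : Prop :=
  ∃ (m : ℕ) (b : Module.Basis (Fin m) ℝ V), Λ = AddSubgroup.closure (Set.range ⇑b)

/-- Dimension of a cone. -/
noncomputable def dim (σ : Set V) : ℕ := Module.finrank ℝ (Submodule.span ℝ σ)

/-- The automorphism group of a fan: lattice automorphisms mapping cones to cones. -/
def Aut (Λ : AddSubgroup V) (F : Set (Set V)) : Set (V ≃ₗ[ℝ] V) :=
  {f | ⇑f '' (Λ : Set V) = (Λ : Set V) ∧ ∀ σ ∈ F, ⇑f '' σ ∈ F}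

/-- The ray generated by `v`. -/
def rayOf (v : V) : Set V := {x | ∃ c : ℝ, 0 ≤ c ∧ x = c • v}

/-- The set `Prim(Σ)` of primitive lattice generators of the rays of the fan `F`. -/
def PrimFan (Λ : AddSubgroup V) (F : Set (Set V)) : Set V :=
  {v | v ∈ Λ ∧ v ≠ 0 ∧ rayOf v ∈ F ∧ ∀ u ∈ Λ, u ∈ rayOf v → ∃ k : ℕ, u = k • v}

/-- Every automorphism of the fan is an isometry (for the chosen inner product). -/
def AutIsometric (Λ : AddSubgroup V) (F : Set (Set V)) : Prop :=
  ∀ f ∈ Aut Λ F, ∀ v : V, ‖f v‖ = ‖v‖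

/-- The fan `F` is associated to a root system: for every facet (codimension-one cone)
`σ`, there is a reflection fixing the hyperplane spanned by `σ` that is an automorphism
of the fan. -/
def AssociatedToRS (Λ : AddSubgroup V) (F : Set (Set V)) : Prop :=
  ∀ σ ∈ F, dim σ + 1 = Module.finrank ℝ V →
    ∃ s ∈ Aut Λ F, s ≠ 1 ∧ s * s = 1 ∧ ∀ v ∈ Submodule.span ℝ σ, s v = v

/-- `Φ(Σ)`: the set of primitive lattice vectors normal to the facet hyperplanes. -/
def Phi (Λ : AddSubgroup V) (F : Set (Set V)) : Set V :=
  {a | ∃ σ ∈ F, dim σ + 1 = Module.finrank ℝ V ∧ a ∈ Λ ∧ a ≠ 0 ∧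
    (∀ v ∈ σ, ⟪a, v⟫ = 0) ∧
    ∀ u ∈ Λ, (∀ v ∈ σ, ⟪u, v⟫ = 0) → ∃ k : ℤ, u = k • a}

/-- The Weyl group of `Φ(Σ)`: generated by the reflections `s_α`, `α ∈ Φ(Σ)`. -/
def WeylOf (Λ : AddSubgroup V) (F : Set (Set V)) : Subgroup (V ≃ₗ[ℝ] V) :=
  Subgroup.closure {g : V ≃ₗ[ℝ] V | ∃ a ∈ Phi Λ F, ∀ v, g v = reflAt a v}

/-- A (closed) Weyl chamber of a finite set of vectors `Φ`. -/
def IsWeylChamber (Φ : Set V) (E : Set V) : Prop :=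
  ∃ u : V, (∀ a ∈ Φ, ⟪u, a⟫ ≠ 0) ∧ E = {v | ∀ a ∈ Φ, 0 ≤ ⟪u, a⟫ * ⟪v, a⟫}

end FanRS


section Aux

open FanRS

variable {V : Type*} [NormedAddCommGroup V] [InnerProductSpace ℝ V]

lemma coneOf_zero_mem (S : Finset V) : (0 : V) ∈ FanRS.coneOf S :=
  ⟨fun _ => 0, fun _ => le_refl 0, by simp⟩

lemma coneOf_add {S : Finset V} {x y : V} (hx : x ∈ FanRS.coneOf S)
    (hy : y ∈ FanRS.coneOf S) : x + y ∈ FanRS.coneOf S := by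
  obtain ⟨c, hc, rfl⟩ := hx
  obtain ⟨d, hd, rfl⟩ := hy
  exact ⟨c + d, fun x => add_nonneg (hc x) (hd x), by
    simp [add_smul, Finset.sum_add_distrib]⟩

lemma coneOf_smul {S : Finset V} {x : V} {c : ℝ} (hc : 0 ≤ c)
    (hx : x ∈ FanRS.coneOf S) : c • x ∈ FanRS.coneOf S := by
  obtain ⟨d, hd, rfl⟩ := hx
  exact ⟨fun y => c * d y, fun y => mul_nonneg hc (hd y), by
    rw [Finset.smul_sum]; simp [mul_smul]⟩

lemma latticeCone_zero_mem {Λ : AddSubgroup V} {σ : Set V}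
    (h : FanRS.IsLatticeCone Λ σ) : (0 : V) ∈ σ := by
  obtain ⟨S, -, rfl, -⟩ := h
  exact coneOf_zero_mem S

lemma latticeCone_add {Λ : AddSubgroup V} {σ : Set V}
    (h : FanRS.IsLatticeCone Λ σ) {x y : V} (hx : x ∈ σ) (hy : y ∈ σ) : x + y ∈ σ := by
  obtain ⟨S, -, rfl, -⟩ := h
  exact coneOf_add hx hy

lemma latticeCone_smul {Λ : AddSubgroup V} {σ : Set V}
    (h : FanRS.IsLatticeCone Λ σ) {x : V} {c : ℝ} (hc : 0 ≤ c) (hx : x ∈ σ) : c • x ∈ σ := by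
  obtain ⟨S, -, rfl, -⟩ := h
  exact coneOf_smul hc hx

lemma latticeCone_span_sub {Λ : AddSubgroup V} {σ : Set V}
    (h : FanRS.IsLatticeCone Λ σ) {x : V} (hx : x ∈ Submodule.span ℝ σ) :
    ∃ a ∈ σ, ∃ b ∈ σ, x = a - b := by
  induction hx using Submodule.span_induction with
  | mem y hy => exact ⟨y, hy, 0, latticeCone_zero_mem h, by simp⟩
  | zero => exact ⟨0, latticeCone_zero_mem h, 0, latticeCone_zero_mem h, by simp⟩
  | add y z _ _ hy hz =>
    obtain ⟨a, ha, b, hb, rfl⟩ := hy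
    obtain ⟨a', ha', b', hb', rfl⟩ := hz
    exact ⟨a + a', latticeCone_add h ha ha', b + b', latticeCone_add h hb hb', by abel⟩
  | smul c y _ hy =>
    obtain ⟨a, ha, b, hb, rfl⟩ := hy
    rcases le_or_gt 0 c with h0 | h0
    · exact ⟨c • a, latticeCone_smul h h0 ha, c • b, latticeCone_smul h h0 hb, by rw [smul_sub]⟩
    · refine ⟨(-c) • b, latticeCone_smul h (by linarith) hb, (-c) • a, latticeCone_smul h (by linarith) ha, ?_⟩
      rw [smul_sub, neg_smul, neg_smul]; abel

/-- If `ρ ⊆ σ` are cones of a fan, then `σ ∩ span ρ ⊆ ρ`. -/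
lemma mem_of_mem_span_face {Λ : AddSubgroup V} {F : Set (Set V)} (hF : FanRS.IsFan Λ F)
    {σ ρ : Set V} (hσ : σ ∈ F) (hρ : ρ ∈ F) (hsub : ρ ⊆ σ) {x : V}
    (hxσ : x ∈ σ) (hxs : x ∈ Submodule.span ℝ ρ) : x ∈ ρ := by
  obtain ⟨a, ha, b, hb, hx⟩ := latticeCone_span_sub (hF.isCone ρ hρ) hxs
  obtain ⟨-, -, hface⟩ := (hF.inter_mem σ hσ ρ hρ).2.1
  rw [Set.inter_eq_right.mpr hsub] at hface
  have hab : x + b ∈ ρ := by rw [hx]; simpa using ha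
  exact (hface x hxσ b (hsub hb) hab).1

/-- Key step: if an inner-product preserving fan automorphism fixes the span of
`ρ` pointwise and stabilizes `σ ⊇ ρ` with `dim σ = dim ρ + 1`, it fixes `span σ`. -/
lemma key_step [FiniteDimensional ℝ V] {Λ : AddSubgroup V} {F : Set (Set V)}
    (hF : FanRS.IsFan Λ F) {f : V ≃ₗ[ℝ] V}
    (hinner : ∀ x y : V, ⟪f x, f y⟫ = ⟪x, y⟫)
    {σ ρ : Set V} (hσF : σ ∈ F) (hρF : ρ ∈ F) (hsub : ρ ⊆ σ)
    (hd : Module.finrank ℝ (Submodule.span ℝ σ)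
        = Module.finrank ℝ (Submodule.span ℝ ρ) + 1)
    (hρfix : ∀ v ∈ Submodule.span ℝ ρ, f v = v)
    (hσstab : ⇑f '' σ = σ) :
    ∀ v ∈ Submodule.span ℝ σ, f v = v := by
  set W : Submodule ℝ V := Submodule.span ℝ σ with hWdef
  set W' : Submodule ℝ V := Submodule.span ℝ ρ with hW'def
  have hW'W : W' ≤ W := Submodule.span_mono hsub
  have hmapW : Submodule.map (f : V →ₗ[ℝ] V) W = W := by
    have himg : (⇑(f : V →ₗ[ℝ] V)) '' σ = σ := hσstab
    rw [hWdef, Submodule.map_span, himg]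
  -- pick v ∈ σ \ span ρ
  have hex : ∃ v ∈ σ, v ∉ W' := by
    by_contra hcon
    push_neg at hcon
    have hle : W ≤ W' := Submodule.span_le.mpr hcon
    have := Submodule.finrank_mono hle
    omega
  obtain ⟨v, hvσ, hvW'⟩ := hex
  have hvW : v ∈ W := Submodule.subset_span hvσ
  obtain ⟨p, hpW', u, huO, hvpu⟩ : ∃ p ∈ W', ∃ u ∈ W'ᗮ, v = p + u :=
    ⟨W'.starProjection v, W'.starProjection_apply_mem v, v - W'.starProjection v,
      W'.sub_starProjection_mem_orthogonal v, by abel⟩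
  have huW : u ∈ W := by
    have h := Submodule.sub_mem W hvW (hW'W hpW')
    rwa [hvpu, add_sub_cancel_left] at h
  have hune : u ≠ 0 := by
    intro h
    exact hvW' (by rw [hvpu, h, add_zero]; exact hpW')
  have huW' : u ∉ W' := by
    intro h
    exact hune (inner_self_eq_zero.mp ((Submodule.mem_orthogonal W' u).mp huO u h))
  -- W = W' ⊔ ℝu
  set K : Submodule ℝ V := W' ⊔ Submodule.span ℝ {u} with hKdef
  have hKW : K ≤ W := sup_le hW'W (Submodule.span_le.mpr (by simpa using huW))
  have hlt : W' < K := lt_of_le_of_ne le_sup_left (by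
    intro h
    exact huW' (h ▸ Submodule.mem_sup_right (Submodule.mem_span_singleton_self u)))
  have hKeq : K = W := by
    refine Submodule.eq_of_le_of_finrank_le hKW ?_
    have h1 := Submodule.finrank_lt_finrank_of_lt hlt
    omega
  -- f u = ± u
  have hfuW : f u ∈ W := by
    rw [← hmapW]
    exact Submodule.mem_map_of_mem huW
  have hfuO : f u ∈ W'ᗮ := by
    rw [Submodule.mem_orthogonal]
    intro w hw
    calc ⟪w, f u⟫ = ⟪f w, f u⟫ := by rw [hρfix w hw]
    _ = ⟪w, u⟫ := hinner w u
    _ = 0 := (Submodule.mem_orthogonal W' u).mp huO w hw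
  obtain ⟨w', hw', z, hz, hsum⟩ := Submodule.mem_sup.mp (hKeq ▸ hfuW)
  obtain ⟨s, rfl⟩ := Submodule.mem_span_singleton.mp hz
  have hw'0 : w' = 0 := by
    have h1 : ⟪w', f u⟫ = 0 := (Submodule.mem_orthogonal W' (f u)).mp hfuO w' hw'
    have h2 : ⟪w', u⟫ = 0 := (Submodule.mem_orthogonal W' u).mp huO w' hw'
    rw [← hsum, inner_add_right, real_inner_smul_right, h2, mul_zero, add_zero] at h1
    exact inner_self_eq_zero.mp h1
  have hfu : f u = s • u := by rw [← hsum, hw'0, zero_add]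
  have hs : s = 1 ∨ s = -1 := by
    have h1 := hinner u u
    rw [hfu, real_inner_smul_left, real_inner_smul_right] at h1
    have hiu : ⟪u, u⟫ ≠ 0 := fun h => hune (inner_self_eq_zero.mp h)
    have h2 : (s * s - 1) * ⟪u, u⟫ = 0 := by ring_nf; linarith [h1]
    rcases mul_eq_zero.mp h2 with h3 | h3
    · exact mul_self_eq_one_iff.mp (by linarith)
    · exact absurd h3 hiu
  have hfu1 : f u = u := by
    rcases hs with h | h
    · rw [hfu, h, one_smul]
    -- rule out s = -1 using the cone structure
    exfalso
    have hfu' : f u = -u := by rw [hfu, h, neg_one_smul]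
    have hfv : f v = p - u := by
      rw [hvpu, map_add, hρfix p hpW', hfu', sub_eq_add_neg]
    have hfvσ : f v ∈ σ := by
      rw [← hσstab]
      exact Set.mem_image_of_mem _ hvσ
    have hcσ := hF.isCone σ hσF
    have hsumpp : v + f v = p + p := by rw [hfv, hvpu]; abel
    have hppσ : p + p ∈ σ := hsumpp ▸ latticeCone_add hcσ hvσ hfvσ
    have hppρ : p + p ∈ ρ :=
      mem_of_mem_span_face hF hσF hρF hsub hppσ (Submodule.add_mem _ hpW' hpW')
    obtain ⟨-, -, hface⟩ := (hF.inter_mem σ hσF ρ hρF).2.1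
    rw [Set.inter_eq_right.mpr hsub] at hface
    have hsum2 : v + f v ∈ ρ := hsumpp ▸ hppρ
    have hvρ : v ∈ ρ := (hface v hvσ (f v) hfvσ hsum2).1
    exact hvW' (Submodule.subset_span hvρ)
  -- conclude
  intro x hx
  rw [← hKeq] at hx
  obtain ⟨w, hw, z, hz, rfl⟩ := Submodule.mem_sup.mp hx
  obtain ⟨t, rfl⟩ := Submodule.mem_span_singleton.mp hz
  rw [map_add, hρfix w hw, map_smul, hfu1]

end Aux

/-- if `f ∈ Aut(Σ)` is an isometry stabilizing a partial flag of cones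
`{0} ⊊ τ_1 ⊊ ⋯ ⊊ τ_r` with `τ_i ∈ Σ(i)`, then `f` restricts to the identity on the
linear span of `τ_r`. -/
theorem statement17 {V : Type*} [NormedAddCommGroup V] [InnerProductSpace ℝ V]
    [FiniteDimensional ℝ V] (Λ : AddSubgroup V) (F : Set (Set V))
    (hΛ : FanRS.IsLattice Λ) (hF : FanRS.IsFan Λ F) (hc : FanRS.IsComplete F)
    (f : V ≃ₗ[ℝ] V) (hf : f ∈ FanRS.Aut Λ F) (hiso : ∀ v : V, ‖f v‖ = ‖v‖)
    (r : ℕ) (hr : 0 < r) (τ : Fin r → Set V)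
    (hmem : ∀ i, τ i ∈ F ∧ FanRS.dim (τ i) = (i : ℕ) + 1)
    (hchain : ∀ i j : Fin r, i < j → τ i ⊆ τ j ∧ τ i ≠ τ j)
    (hstab : ∀ i, ⇑f '' τ i = τ i) :
    ∀ v ∈ Submodule.span ℝ (τ ⟨r - 1, by omega⟩), f v = v := by
  classical
  have hinner : ∀ x y : V, ⟪f x, f y⟫ = ⟪x, y⟫ := by
    intro x y
    rw [real_inner_eq_norm_add_mul_self_sub_norm_mul_self_sub_norm_mul_self_div_two,
      real_inner_eq_norm_add_mul_self_sub_norm_mul_self_sub_norm_mul_self_div_two,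
      ← map_add, hiso, hiso, hiso]
  -- the singleton {0} is a cone of the fan
  obtain ⟨S0, -, hσ0eq, hstrict⟩ := hF.isCone _ (hmem ⟨0, hr⟩).1
  have h0σ : (0 : V) ∈ τ ⟨0, hr⟩ := hσ0eq ▸ coneOf_zero_mem S0
  have hface0 : FanRS.IsFace (τ ⟨0, hr⟩) {(0 : V)} := by
    refine ⟨Set.singleton_subset_iff.mpr h0σ, convex_singleton 0, ?_⟩
    intro x hx y hy hxy
    rw [Set.mem_singleton_iff] at hxy
    have hyx : y = -x := eq_neg_of_add_eq_zero_right hxy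
    have hx0 : x = 0 := hstrict x hx (hyx ▸ hy)
    exact ⟨Set.mem_singleton_iff.mpr hx0,
      Set.mem_singleton_iff.mpr (by rw [hyx, hx0, neg_zero])⟩
  have hzeroF : {(0 : V)} ∈ F := hF.face_mem _ (hmem ⟨0, hr⟩).1 _ hface0
  have main : ∀ i : ℕ, ∀ hi : i < r, ∀ v ∈ Submodule.span ℝ (τ ⟨i, hi⟩), f v = v := by
    intro i
    induction i with
    | zero =>
      intro hi
      refine key_step hF hinner (hmem ⟨0, hi⟩).1 hzeroF
        (Set.singleton_subset_iff.mpr h0σ) ?_ ?_ (hstab ⟨0, hi⟩)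
      · have h1 := (hmem ⟨0, hi⟩).2
        unfold FanRS.dim at h1
        rw [h1, Submodule.span_zero_singleton, finrank_bot]
      · intro v hv
        rw [Submodule.span_zero_singleton, Submodule.mem_bot] at hv
        rw [hv, map_zero]
    | succ i ih =>
      intro hi
      have hi' : i < r := by omega
      have hlt : (⟨i, hi'⟩ : Fin r) < ⟨i + 1, hi⟩ := by
        rw [Fin.mk_lt_mk]; omega
      refine key_step hF hinner (hmem ⟨i + 1, hi⟩).1 (hmem ⟨i, hi'⟩).1
        (hchain ⟨i, hi'⟩ ⟨i + 1, hi⟩ hlt).1 ?_ (ih hi') (hstab ⟨i + 1, hi⟩)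
      have h1 := (hmem ⟨i + 1, hi⟩).2
      have h2 := (hmem ⟨i, hi'⟩).2
      unfold FanRS.dim at h1 h2
      rw [h1, h2]
  exact main (r - 1) (by omega)
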